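/- Let M be a 3-dimensional contact sub-Riemannian manifold, A = A1ν1 + A2ν2 a horizontal magnetic potential with d_H A = β = β1ν1∧ω + β2ν2∧ω, and set Y_i = X_i + A(X_i)∂w (i=1,2), Y0 = X0 + dA(X1,X2)∂w on M × R. Then [Y1,Y2] = c¹₁₂Y1 + c²₁₂Y2 + Y0, and [Y_i, Y0] ≡ β_i ∂w modulo span{Y1,Y2} for i=1,2. In particular if (β1,β2) ≠ (0,0) at a point p, the distribution span{Y1,Y2} is bracket generating of step 3 at {p} × R. -/

import Mathlib

/-- Lifted vector fields on `M × ℝ` of the form `Z + a∂w` (coefficients independent of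
`w`) are encoded as pairs `(Z, a)` of a vector field on `M` and a function `M → ℝ`;
their Lie bracket is `[(Z,a),(W,b)] = ([Z,W], Zb - Wa)`. -/
def llb {M E : Type*} [AddCommGroup E] [Module ℝ E]
    (Dop : (M → E) → (M → ℝ) → (M → ℝ)) (lb : (M → E) → (M → E) → (M → E))
    (Z W : (M → E) × (M → ℝ)) : (M → E) × (M → ℝ) :=
  (lb Z.1 W.1, Dop Z.1 W.2 - Dop W.1 Z.2)

/-- Multiplication of a lifted vector field by a function on `M`. -/
def fsmul {M E : Type*} [AddCommGroup E] [Module ℝ E]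
    (g : M → ℝ) (Z : (M → E) × (M → ℝ)) : (M → E) × (M → ℝ) :=
  (fun p => g p • Z.1 p, g * Z.2)

/-- Evaluation of a lifted vector field at a point, as a tangent vector in `E × ℝ`. -/
def evp {M E : Type*} (Z : (M → E) × (M → ℝ)) (p : M) : E × ℝ := (Z.1 p, Z.2 p)

section Aux
variable {M E : Type*} [AddCommGroup E] [Module ℝ E]
  (Dop : (M → E) → (M → ℝ) → (M → ℝ)) (lb : (M → E) → (M → E) → (M → E))

lemma aux_llb_add_right
    (hDadd : ∀ Z (f g : M → ℝ), Dop Z (f + g) = Dop Z f + Dop Z g)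
    (hDZadd : ∀ Z W f, Dop (Z + W) f = Dop Z f + Dop W f)
    (hlbadd₂ : ∀ Z W U, lb Z (W + U) = lb Z W + lb Z U)
    (Z W U : (M → E) × (M → ℝ)) :
    llb Dop lb Z (W + U) = llb Dop lb Z W + llb Dop lb Z U := by
  unfold llb
  refine Prod.ext ?_ ?_
  · simp [hlbadd₂]
  · simp only [Prod.snd_add, Prod.fst_add, hDadd, hDZadd]
    abel

lemma aux_llb_fsmul_right
    (hDadd : ∀ Z (f g : M → ℝ), Dop Z (f + g) = Dop Z f + Dop Z g)
    (hDmul : ∀ Z (f g : M → ℝ), Dop Z (f * g) = Dop Z f * g + f * Dop Z g)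
    (hDZsmul : ∀ (g : M → ℝ) Z f, Dop (fun p => g p • Z p) f = g * Dop Z f)
    (hlbsmul₂ : ∀ (g : M → ℝ) Z W,
      lb Z (fun p => g p • W p) = fun p => g p • lb Z W p + Dop Z g p • W p)
    (g : M → ℝ) (Z W : (M → E) × (M → ℝ)) :
    llb Dop lb Z (fsmul g W) = fsmul g (llb Dop lb Z W) + fsmul (Dop Z.1 g) W := by
  unfold llb fsmul
  refine Prod.ext ?_ ?_
  · funext p
    simp [hlbsmul₂]
  · funext p
    simp only [Prod.snd_add, Prod.fst_add, hDmul, hDZsmul, Pi.add_apply, Pi.sub_apply,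
      Pi.mul_apply]
    ring

lemma aux_evp_add {Z W : (M → E) × (M → ℝ)} (p : M) :
    evp (Z + W) p = evp Z p + evp W p := rfl

lemma aux_evp_fsmul (g : M → ℝ) (Z : (M → E) × (M → ℝ)) (p : M) :
    evp (fsmul g Z) p = g p • evp Z p := rfl

end Aux

/-- Let `M` be a 3-dimensional contact sub-Riemannian manifold with frame `X1, X2, X0`
(vector fields valued in the tangent model `E`, acting on functions via `Dop` and with
Lie bracket `lb`), structure functions `c^k_{ij}`, horizontal potential `A = A1ν1+A2ν2`
with `d_H A = β1ν1∧ω + β2ν2∧ω`, and lifted fields `Y_i = X_i + A_i∂w`,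
`Y0 = X0 + dA(X1,X2)∂w` on `M × ℝ`. Then `[Y1,Y2] = c¹₁₂Y1 + c²₁₂Y2 + Y0`,
`[Y_i,Y0] ≡ β_i∂w mod span{Y1,Y2}`, and wherever `(β1,β2) ≠ (0,0)` the distribution
`span{Y1,Y2}` is bracket generating of step 3 on `{p} × ℝ`. -/
theorem lifted_structure_step_three {M E : Type*} [AddCommGroup E] [Module ℝ E]
    (Dop : (M → E) → (M → ℝ) → (M → ℝ))
    (lb : (M → E) → (M → E) → (M → E))
    (hDadd : ∀ Z (f g : M → ℝ), Dop Z (f + g) = Dop Z f + Dop Z g)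
    (hDmul : ∀ Z (f g : M → ℝ), Dop Z (f * g) = Dop Z f * g + f * Dop Z g)
    (hDZadd : ∀ Z W f, Dop (Z + W) f = Dop Z f + Dop W f)
    (hDZsmul : ∀ (g : M → ℝ) Z f, Dop (fun p => g p • Z p) f = g * Dop Z f)
    (hlbalt : ∀ Z, lb Z Z = 0)
    (hlbadd₁ : ∀ Z W U, lb (Z + W) U = lb Z U + lb W U)
    (hlbadd₂ : ∀ Z W U, lb Z (W + U) = lb Z W + lb Z U)
    (hlbsmul₁ : ∀ (g : M → ℝ) Z W,
      lb (fun p => g p • Z p) W = fun p => g p • lb Z W p - Dop W g p • Z p)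
    (hlbsmul₂ : ∀ (g : M → ℝ) Z W,
      lb Z (fun p => g p • W p) = fun p => g p • lb Z W p + Dop Z g p • W p)
    (X1 X2 X0 : M → E)
    (c112 c212 c110 c210 c120 c220 A1 A2 DA β1 β2 : M → ℝ)
    (hbr12 : lb X1 X2 = fun p => c112 p • X1 p + c212 p • X2 p + X0 p)
    (hbr10 : lb X1 X0 = fun p => c110 p • X1 p + c210 p • X2 p)
    (hbr20 : lb X2 X0 = fun p => c120 p • X1 p + c220 p • X2 p)
    (hframe : ∀ p : M, Submodule.span ℝ ({X1 p, X2 p, X0 p} : Set E) = ⊤)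
    (hindep : ∀ p : M, LinearIndependent ℝ ![X1 p, X2 p, X0 p])
    (hDA : DA = Dop X1 A2 - Dop X2 A1 - c112 * A1 - c212 * A2)
    (hβ1 : β1 = Dop X1 DA - Dop X0 A1 - c110 * A1 - c210 * A2)
    (hβ2 : β2 = Dop X2 DA - Dop X0 A2 - c120 * A1 - c220 * A2) :
    llb Dop lb (X1, A1) (X2, A2)
      = fsmul c112 (X1, A1) + fsmul c212 (X2, A2) + (X0, DA)
    ∧ (∃ u1 u2 : M → ℝ, llb Dop lb (X1, A1) (X0, DA)
      = fsmul u1 (X1, A1) + fsmul u2 (X2, A2) + ((0 : M → E), β1))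
    ∧ (∃ u1 u2 : M → ℝ, llb Dop lb (X2, A2) (X0, DA)
      = fsmul u1 (X1, A1) + fsmul u2 (X2, A2) + ((0 : M → E), β2))
    ∧ (∀ p : M, (β1 p, β2 p) ≠ (0, 0) →
        Submodule.span ℝ
          ({evp (X1, A1) p, evp (X2, A2) p,
            evp (llb Dop lb (X1, A1) (X2, A2)) p,
            evp (llb Dop lb (X1, A1) (llb Dop lb (X1, A1) (X2, A2))) p,
            evp (llb Dop lb (X2, A2) (llb Dop lb (X1, A1) (X2, A2))) p} : Set (E × ℝ))
          = ⊤
        ∧ Submodule.span ℝ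
          ({evp (X1, A1) p, evp (X2, A2) p,
            evp (llb Dop lb (X1, A1) (X2, A2)) p} : Set (E × ℝ)) ≠ ⊤) := by
  have h1 : llb Dop lb (X1, A1) (X2, A2)
      = fsmul c112 (X1, A1) + fsmul c212 (X2, A2) + (X0, DA) := by
    unfold llb fsmul
    refine Prod.ext ?_ ?_
    · funext p
      simp [hbr12]
    · funext p
      simp only [hDA, Prod.snd_add, Prod.fst_add, Pi.add_apply, Pi.sub_apply, Pi.mul_apply]
      ring
  have h2 : llb Dop lb (X1, A1) (X0, DA)
      = fsmul c110 (X1, A1) + fsmul c210 (X2, A2) + ((0 : M → E), β1) := by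
    unfold llb fsmul
    refine Prod.ext ?_ ?_
    · funext p
      simp [hbr10]
    · funext p
      simp only [hβ1, Prod.snd_add, Prod.fst_add, Pi.add_apply, Pi.sub_apply, Pi.mul_apply]
      ring
  have h3 : llb Dop lb (X2, A2) (X0, DA)
      = fsmul c120 (X1, A1) + fsmul c220 (X2, A2) + ((0 : M → E), β2) := by
    unfold llb fsmul
    refine Prod.ext ?_ ?_
    · funext p
      simp [hbr20]
    · funext p
      simp only [hβ2, Prod.snd_add, Prod.fst_add, Pi.add_apply, Pi.sub_apply, Pi.mul_apply]
      ring
  refine ⟨h1, ⟨c110, c210, h2⟩, ⟨c120, c220, h3⟩, ?_⟩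
  intro p hβ
  have hY11 : llb Dop lb (X1, A1) (X1, A1) = 0 := by
    unfold llb
    exact Prod.ext (by simp [hlbalt]) (by simp)
  have hanti : llb Dop lb (X2, A2) (X1, A1) = -llb Dop lb (X1, A1) (X2, A2) := by
    have h0 : lb (X1 + X2) (X1 + X2) = 0 := hlbalt _
    rw [hlbadd₁, hlbadd₂, hlbadd₂, hlbalt, hlbalt, zero_add, add_zero] at h0
    have h21 : lb X2 X1 = -lb X1 X2 := by linear_combination (norm := abel) h0
    unfold llb
    refine Prod.ext ?_ ?_
    · simp [h21]
    · simp only [Prod.fst_neg, Prod.snd_neg]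
      abel
  have hiter : ∀ (Yi : (M → E) × (M → ℝ)), llb Dop lb Yi (llb Dop lb (X1, A1) (X2, A2))
      = fsmul c112 (llb Dop lb Yi (X1, A1)) + fsmul (Dop Yi.1 c112) (X1, A1)
        + (fsmul c212 (llb Dop lb Yi (X2, A2)) + fsmul (Dop Yi.1 c212) (X2, A2))
        + llb Dop lb Yi (X0, DA) := by
    intro Yi
    rw [h1, aux_llb_add_right Dop lb hDadd hDZadd hlbadd₂,
      aux_llb_add_right Dop lb hDadd hDZadd hlbadd₂,
      aux_llb_fsmul_right Dop lb hDadd hDmul hDZsmul hlbsmul₂,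
      aux_llb_fsmul_right Dop lb hDadd hDmul hDZsmul hlbsmul₂]
  set v1 : E × ℝ := evp (X1, A1) p with hv1
  set v2 : E × ℝ := evp (X2, A2) p with hv2
  set v3 : E × ℝ := evp (llb Dop lb (X1, A1) (X2, A2)) p with hv3
  have hev4 : evp (llb Dop lb (X1, A1) (llb Dop lb (X1, A1) (X2, A2))) p
      = (Dop X1 c112 p + c110 p) • v1 + (Dop X1 c212 p + c210 p) • v2
        + c212 p • v3 + ((0 : E), β1 p) := by
    rw [hiter (X1, A1), h2, hY11]
    simp only [aux_evp_add, aux_evp_fsmul]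
    have hz : evp (0 : (M → E) × (M → ℝ)) p = 0 := rfl
    have hb : evp ((0 : M → E), β1) p = ((0 : E), β1 p) := rfl
    rw [hz, hb]
    simp only [smul_zero]
    module
  have hev5 : evp (llb Dop lb (X2, A2) (llb Dop lb (X1, A1) (X2, A2))) p
      = (Dop X2 c112 p + c120 p) • v1 + (Dop X2 c212 p + c220 p) • v2
        + (-(c112 p)) • v3 + ((0 : E), β2 p) := by
    have hY22 : llb Dop lb (X2, A2) (X2, A2) = 0 := by
      unfold llb
      exact Prod.ext (by simp [hlbalt]) (by simp)
    rw [hiter (X2, A2), h3, hanti, hY22]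
    simp only [aux_evp_add, aux_evp_fsmul]
    have hz : evp (0 : (M → E) × (M → ℝ)) p = 0 := rfl
    have hb : evp ((0 : M → E), β2) p = ((0 : E), β2 p) := rfl
    have hn : evp (-llb Dop lb (X1, A1) (X2, A2)) p = -v3 := rfl
    rw [hz, hb, hn]
    simp only [smul_zero]
    module
  set v4 : E × ℝ := evp (llb Dop lb (X1, A1) (llb Dop lb (X1, A1) (X2, A2))) p with hv4d
  set v5 : E × ℝ := evp (llb Dop lb (X2, A2) (llb Dop lb (X1, A1) (X2, A2))) p with hv5d
  set T : Submodule ℝ (E × ℝ) := Submodule.span ℝ {v1, v2, v3, v4, v5} with hT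
  have hm1 : v1 ∈ T := Submodule.subset_span (by simp)
  have hm2 : v2 ∈ T := Submodule.subset_span (by simp)
  have hm3 : v3 ∈ T := Submodule.subset_span (by simp)
  have hm4 : v4 ∈ T := Submodule.subset_span (by simp)
  have hm5 : v5 ∈ T := Submodule.subset_span (by simp)
  have hmb1 : ((0 : E), β1 p) ∈ T := by
    have he : ((0 : E), β1 p) = v4 - ((Dop X1 c112 p + c110 p) • v1
        + (Dop X1 c212 p + c210 p) • v2 + c212 p • v3) := by
      rw [hev4]; abel
    rw [he]
    exact sub_mem hm4 (add_mem (add_mem (Submodule.smul_mem _ _ hm1)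
      (Submodule.smul_mem _ _ hm2)) (Submodule.smul_mem _ _ hm3))
  have hmb2 : ((0 : E), β2 p) ∈ T := by
    have he : ((0 : E), β2 p) = v5 - ((Dop X2 c112 p + c120 p) • v1
        + (Dop X2 c212 p + c220 p) • v2 + (-(c112 p)) • v3) := by
      rw [hev5]; abel
    rw [he]
    exact sub_mem hm5 (add_mem (add_mem (Submodule.smul_mem _ _ hm1)
      (Submodule.smul_mem _ _ hm2)) (Submodule.smul_mem _ _ hm3))
  have hone : ((0 : E), (1 : ℝ)) ∈ T := by
    by_cases hb1 : β1 p = 0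
    · have hb2 : β2 p ≠ 0 := by
        intro hb2; exact hβ (by rw [hb1, hb2])
      have : ((0 : E), (1 : ℝ)) = (β2 p)⁻¹ • ((0 : E), β2 p) := by
        rw [Prod.smul_mk, smul_zero, smul_eq_mul, inv_mul_cancel₀ hb2]
      rw [this]; exact Submodule.smul_mem _ _ hmb2
    · have : ((0 : E), (1 : ℝ)) = (β1 p)⁻¹ • ((0 : E), β1 p) := by
        rw [Prod.smul_mk, smul_zero, smul_eq_mul, inv_mul_cancel₀ hb1]
      rw [this]; exact Submodule.smul_mem _ _ hmb1
  have hX1m : ((X1 p), (0 : ℝ)) ∈ T := by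
    have : ((X1 p), (0 : ℝ)) = v1 - A1 p • ((0 : E), (1 : ℝ)) := by
      rw [hv1, Prod.smul_mk, smul_zero, smul_eq_mul, mul_one]
      exact Prod.ext (by simp [evp]) (by simp [evp])
    rw [this]; exact sub_mem hm1 (Submodule.smul_mem _ _ hone)
  have hX2m : ((X2 p), (0 : ℝ)) ∈ T := by
    have : ((X2 p), (0 : ℝ)) = v2 - A2 p • ((0 : E), (1 : ℝ)) := by
      rw [hv2, Prod.smul_mk, smul_zero, smul_eq_mul, mul_one]
      exact Prod.ext (by simp [evp]) (by simp [evp])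
    rw [this]; exact sub_mem hm2 (Submodule.smul_mem _ _ hone)
  have hlb12p : (lb X1 X2) p = c112 p • X1 p + c212 p • X2 p + X0 p := congrFun hbr12 p
  have hX0m : ((X0 p), (0 : ℝ)) ∈ T := by
    have : ((X0 p), (0 : ℝ)) = v3 - c112 p • ((X1 p), (0 : ℝ))
        - c212 p • ((X2 p), (0 : ℝ))
        - (Dop X1 A2 p - Dop X2 A1 p) • ((0 : E), (1 : ℝ)) := by
      rw [hv3]
      refine Prod.ext ?_ ?_
      · show X0 p = (lb X1 X2) p - c112 p • X1 p - c212 p • X2 p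
          - (Dop X1 A2 p - Dop X2 A1 p) • (0 : E)
        rw [hlb12p, smul_zero]; abel
      · show (0 : ℝ) = (Dop X1 A2 p - Dop X2 A1 p) - c112 p • (0:ℝ) - c212 p • (0:ℝ)
          - (Dop X1 A2 p - Dop X2 A1 p) • (1 : ℝ)
        simp
    rw [this]
    exact sub_mem (sub_mem (sub_mem hm3 (Submodule.smul_mem _ _ hX1m))
      (Submodule.smul_mem _ _ hX2m)) (Submodule.smul_mem _ _ hone)
  constructor
  · rw [eq_top_iff]
    rintro ⟨x, t⟩ -
    have hx : x ∈ Submodule.span ℝ ({X1 p, X2 p, X0 p} : Set E) := by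
      rw [hframe p]; exact Submodule.mem_top
    have hx0 : ((x, (0 : ℝ)) : E × ℝ) ∈ T := by
      induction hx using Submodule.span_induction with
      | mem y hy =>
        simp only [Set.mem_insert_iff, Set.mem_singleton_iff] at hy
        rcases hy with h | h | h
        · rw [h]; exact hX1m
        · rw [h]; exact hX2m
        · rw [h]; exact hX0m
      | zero => exact zero_mem T
      | add y z _ _ hy hz =>
        have : ((y + z, (0 : ℝ)) : E × ℝ) = (y, (0:ℝ)) + (z, (0:ℝ)) := by
          rw [Prod.mk_add_mk, add_zero]
        rw [this]; exact add_mem hy hz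
      | smul a y _ hy =>
        have : ((a • y, (0 : ℝ)) : E × ℝ) = a • ((y, (0:ℝ)) : E × ℝ) := by
          rw [Prod.smul_mk, smul_zero]
        rw [this]; exact Submodule.smul_mem _ _ hy
    have : ((x, t) : E × ℝ) = (x, (0:ℝ)) + t • ((0 : E), (1 : ℝ)) := by
      rw [Prod.smul_mk, smul_zero, smul_eq_mul, mul_one, Prod.mk_add_mk, add_zero, zero_add]
    rw [this]
    exact add_mem hx0 (Submodule.smul_mem _ _ hone)
  · -- the 3-element span is contained in the graph of a linear functional
    have hspan_le : ⊤ ≤ Submodule.span ℝ (Set.range ![X1 p, X2 p, X0 p]) := by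
      rw [show Set.range ![X1 p, X2 p, X0 p] = ({X1 p, X2 p, X0 p} : Set E) by
        ext y
        constructor
        · rintro ⟨i, rfl⟩
          fin_cases i <;> simp
        · intro h
          simp only [Set.mem_insert_iff, Set.mem_singleton_iff] at h
          rcases h with h | h | h
          · exact ⟨0, by simp [h]⟩
          · exact ⟨1, by simp [h]⟩
          · exact ⟨2, by simp [h]⟩,
        hframe p]
    let b : Module.Basis (Fin 3) ℝ E := Module.Basis.mk (hindep p) hspan_le
    let φ : E →ₗ[ℝ] ℝ := b.constr ℝ ![A1 p, A2 p, DA p]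
    have hb0 : b 0 = X1 p := by rw [Module.Basis.mk_apply]; rfl
    have hb1 : b 1 = X2 p := by rw [Module.Basis.mk_apply]; rfl
    have hb2 : b 2 = X0 p := by rw [Module.Basis.mk_apply]; rfl
    have hφ1 : φ (X1 p) = A1 p := by
      have h := b.constr_basis ℝ ![A1 p, A2 p, DA p] 0
      simp only [Matrix.cons_val_zero] at h
      rw [← hb0]; exact h
    have hφ2 : φ (X2 p) = A2 p := by
      have h := b.constr_basis ℝ ![A1 p, A2 p, DA p] 1
      simp only [Matrix.cons_val_one, Matrix.head_cons] at h
      rw [← hb1]; exact h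
    have hφ0 : φ (X0 p) = DA p := by
      have h := b.constr_basis ℝ ![A1 p, A2 p, DA p] 2
      simp only [Matrix.cons_val_two, Matrix.tail_cons, Matrix.head_cons] at h
      rw [← hb2]; exact h
    have hDAp : DA p = Dop X1 A2 p - Dop X2 A1 p - c112 p * A1 p - c212 p * A2 p := by
      rw [hDA]; rfl
    have hle : Submodule.span ℝ ({v1, v2, v3} : Set (E × ℝ)) ≤ φ.graph := by
      rw [Submodule.span_le]
      intro y hy
      simp only [Set.mem_insert_iff, Set.mem_singleton_iff] at hy
      rcases hy with h | h | h <;>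
        rw [h, SetLike.mem_coe, LinearMap.mem_graph_iff]
      · show A1 p = φ (X1 p); rw [hφ1]
      · show A2 p = φ (X2 p); rw [hφ2]
      · show Dop X1 A2 p - Dop X2 A1 p = φ ((lb X1 X2) p)
        rw [hlb12p, map_add, map_add, map_smul, map_smul, hφ1, hφ2, hφ0,
          smul_eq_mul, smul_eq_mul, hDAp]
        ring
    intro htop
    have hmem : ((0 : E), (1 : ℝ)) ∈ φ.graph := hle (htop ▸ Submodule.mem_top)
    rw [LinearMap.mem_graph_iff] at hmem
    simp at hmem
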